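/- The Smart Reverse Rejecting (SRR) rule is weakly non-bossy: if agent i's priority for the preferential categories decreases from instance I to instance I' (the priorities of c_u^1 and c_u^2 remain equal to the baseline ordering ≻_π, which is the same in both instances), and i is unmatched under the SRR rule at I, then every agent j with i ≻_π j is matched under the SRR rule at I if and only if j is matched under the SRR rule at I'. -/

import Mathlib

open scoped Classical

/-- An instance of the rationing problem: a quota for every category and, for every
category `c`, a priority ranking `≿_c`: a total preorder on `N ∪ {∅}`, where we model
`N ∪ {∅}` as `Option N` with `none` playing the role of `∅`. -/
structure Inst (N C : Type*) where
  quota : C → ℕ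
  prio : C → Option N → Option N → Prop
  total : ∀ c x y, prio c x y ∨ prio c y x
  trans : ∀ c x y z, prio c x y → prio c y z → prio c x z

namespace Inst

variable {N C : Type*}

/-- The strict part `≻_c` of the priority ranking `≿_c`. -/
def Strict (I : Inst N C) (c : C) (x y : Option N) : Prop :=
  I.prio c x y ∧ ¬ I.prio c y x

/-- Agent `i` is eligible for category `c` if `i ≻_c ∅`. -/
def Eligible (I : Inst N C) (i : N) (c : C) : Prop :=
  I.Strict c (some i) none

end Inst

variable {N C : Type*} [Fintype N] [DecidableEq N] [DecidableEq C]

/-- The number of matched agents of (the function) `μ`. -/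
def msize (μ : N → Option C) : ℕ :=
  (Finset.univ.filter fun i => μ i ≠ none).card

/-- `μ` satisfies the capacity constraints: every category `c` is matched
to at most `quota c` agents. -/
def Inst.IsMatching (I : Inst N C) (μ : N → Option C) : Prop :=
  ∀ c, (Finset.univ.filter fun i => μ i = some c).card ≤ I.quota c

/-- A baseline ordering `≻_π`, given as a duplicate-free list of all agents,
listed from highest priority to lowest priority; so `i ≻_π j` iff
`order.idxOf i < order.idxOf j`. -/
def IsBaseline (order : List N) : Prop :=
  order.Nodup ∧ ∀ i : N, i ∈ order

/-- Agent `i`'s priority decreases from instance `I` to instance `I'`: quotas are unchanged,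
the rankings restricted to `(N ∪ {∅}) \ {i}` are unchanged, and `i` only moves down:
for all `x ≠ i`, `x ≿_c i` implies `x ≿'_c i` and `x ≻_c i` implies `x ≻'_c i`. -/
def PrioDecreases (I I' : Inst N C) (i : N) : Prop :=
  I.quota = I'.quota ∧
  (∀ (c : C) (x y : Option N), x ≠ some i → y ≠ some i → (I.prio c x y ↔ I'.prio c x y)) ∧
  (∀ (c : C) (x : Option N), x ≠ some i → I.prio c x (some i) → I'.prio c x (some i)) ∧
  (∀ (c : C) (x : Option N), x ≠ some i → I.Strict c x (some i) → I'.Strict c x (some i))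

/-- `μ` complies with the eligibility requirements. -/
def Complies (I : Inst N C) (μ : N → Option C) : Prop :=
  ∀ (i : N) (c : C), μ i = some c → I.Eligible i c

/-- The number of agents matched to a preferential category, i.e. a category other than the
unreserved subcategories `cu1` and `cu2`. -/
def beneCount2 (cu1 cu2 : C) (μ : N → Option C) : ℕ :=
  (Finset.univ.filter fun i => μ i ≠ none ∧ μ i ≠ some cu1 ∧ μ i ≠ some cu2).card

/-- `μ` is a matching of the reservation graph of the instance restricted to the
preferential categories that leaves all agents of `S` unmatched. -/
def PMatch (I : Inst N C) (cu1 cu2 : C) (S : Finset N) (μ : N → Option C) : Prop :=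
  I.IsMatching μ ∧ (∀ i ∈ S, μ i = none) ∧
    ∀ (i : N) (c : C), μ i = some c → c ≠ cu1 ∧ c ≠ cu2 ∧ I.Eligible i c

/-- The maximum number of agents of `N \ S` that can simultaneously be matched to
preferential categories. -/
noncomputable def msAvoid (I : Inst N C) (cu1 cu2 : C) (S : Finset N) : ℕ :=
  sSup {k | ∃ μ : N → Option C, PMatch I cu1 cu2 S μ ∧ msize μ = k}

/-- The set `N_1` of agents receiving an unreserved unit of `c_u^1` under the SRR rule:
considering the agents in order of the baseline ordering from highest to lowest priority,
agent `i` is added to `N_1` if `|N_1| < q_{c_u^1}` and the agents in `N \ (N_1 ∪ {i})` can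
still be matched to the preferential categories so as to form a maximum beneficiary
assignment. -/
noncomputable def srrN1 (I : Inst N C) (cu1 cu2 : C) (order : List N) : Finset N :=
  order.foldl
    (fun N1 i =>
      if N1.card < I.quota cu1 ∧
          msAvoid I cu1 cu2 (insert i N1) = msAvoid I cu1 cu2 (∅ : Finset N) then
        insert i N1
      else N1) ∅

/-- `μ` is a matching of the reduced reservation graph (restricted to the preferential
categories) in which the agents of `N1` are removed and, additionally, all edges `{j,c}`
such that some rejected agent `i ∈ R` has `i ≻_c j` are removed. -/
def PMatchR (I : Inst N C) (cu1 cu2 : C) (N1 R : Finset N) (μ : N → Option C) : Prop :=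
  PMatch I cu1 cu2 (N1 ∪ R) μ ∧
    ∀ (i : N) (c : C), μ i = some c → ∀ j ∈ R, ¬ I.Strict c (some j) (some i)

/-- The size of a maximum size matching of the reduced reservation graph (restricted to the
preferential categories, without the agents of `N1`, with rejected set `R`). -/
noncomputable def msR (I : Inst N C) (cu1 cu2 : C) (N1 R : Finset N) : ℕ :=
  sSup {k | ∃ μ : N → Option C, PMatchR I cu1 cu2 N1 R μ ∧ msize μ = k}

/-- The rejected set of the RR rule run on the agents outside `N1` with the preferential
categories, processing the agents from lowest to highest baseline priority. -/
noncomputable def srrRej (I : Inst N C) (cu1 cu2 : C) (order : List N) (N1 : Finset N) :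
    Finset N :=
  (order.filter fun i => decide (i ∉ N1)).foldr
    (fun i R =>
      if msR I cu1 cu2 N1 (insert i R) = msR I cu1 cu2 N1 (∅ : Finset N) then insert i R
      else R) ∅

/-- The final matching of the SRR rule, given the set `N1` of agents matched to `c_u^1` and
the matching `μP` of the remaining agents to the preferential categories: the agents left
unmatched receive the `q_{c_u^2}` units of `c_u^2` in order of the baseline ordering from
highest to lowest priority. -/
noncomputable def srrFinal (I : Inst N C) (cu1 cu2 : C) (order : List N) (N1 : Finset N)
    (μP : N → Option C) : N → Option C := fun i =>
  if i ∈ N1 then some cu1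
  else
    match μP i with
    | some c => some c
    | none =>
      if (Finset.univ.filter fun j =>
            j ∉ N1 ∧ μP j = none ∧ order.idxOf j < order.idxOf i).card <
          I.quota cu2 then
        some cu2
      else none

/-- `μ` is a possible output of the Smart Reverse Rejecting (SRR) rule. -/
def IsSRROutcome (I : Inst N C) (cu1 cu2 : C) (order : List N) (μ : N → Option C) : Prop :=
  ∃ μP : N → Option C,
    PMatchR I cu1 cu2 (srrN1 I cu1 cu2 order) (srrRej I cu1 cu2 order (srrN1 I cu1 cu2 order))
      μP ∧
    msize μP =
      msR I cu1 cu2 (srrN1 I cu1 cu2 order) (srrRej I cu1 cu2 order (srrN1 I cu1 cu2 order)) ∧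
    μ = srrFinal I cu1 cu2 order (srrN1 I cu1 cu2 order) μP

/-! ### Auxiliary lemmas -/

section Aux

lemma msize_le_card (μ : N → Option C) : msize μ ≤ Fintype.card N :=
  Finset.card_filter_le _ _

lemma pmatch_none (I : Inst N C) (cu1 cu2 : C) (S : Finset N) :
    PMatch I cu1 cu2 S (fun _ => none) := by
  refine ⟨fun c => ?_, fun i _ => rfl, fun i c h => by simp at h⟩
  simp [Inst.IsMatching]

lemma pmatchR_none (I : Inst N C) (cu1 cu2 : C) (N1 R : Finset N) :
    PMatchR I cu1 cu2 N1 R (fun _ => none) :=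
  ⟨pmatch_none I cu1 cu2 _, fun i c h => by simp at h⟩

lemma msR_bdd (I : Inst N C) (cu1 cu2 : C) (N1 R : Finset N) :
    BddAbove {k | ∃ μ : N → Option C, PMatchR I cu1 cu2 N1 R μ ∧ msize μ = k} :=
  ⟨Fintype.card N, fun k ⟨μ, _, hk⟩ => hk ▸ msize_le_card μ⟩

lemma msR_exists (I : Inst N C) (cu1 cu2 : C) (N1 R : Finset N) :
    ∃ μ : N → Option C, PMatchR I cu1 cu2 N1 R μ ∧ msize μ = msR I cu1 cu2 N1 R := by
  have h1 : {k | ∃ μ : N → Option C, PMatchR I cu1 cu2 N1 R μ ∧ msize μ = k}.Nonempty :=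
    ⟨msize (fun _ => none), fun _ => none, pmatchR_none I cu1 cu2 N1 R, rfl⟩
  exact Nat.sSup_mem h1 (msR_bdd I cu1 cu2 N1 R)

lemma le_msR {I : Inst N C} {cu1 cu2 : C} {N1 R : Finset N} {μ : N → Option C}
    (h : PMatchR I cu1 cu2 N1 R μ) : msize μ ≤ msR I cu1 cu2 N1 R :=
  le_csSup (msR_bdd I cu1 cu2 N1 R) ⟨μ, h, rfl⟩

lemma msR_le_msR {I I' : Inst N C} {cu1 cu2 cu1' cu2' : C} {N1 R N1' R' : Finset N}
    (h : ∀ μ : N → Option C, PMatchR I cu1 cu2 N1 R μ → PMatchR I' cu1' cu2' N1' R' μ) :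
    msR I cu1 cu2 N1 R ≤ msR I' cu1' cu2' N1' R' := by
  obtain ⟨μ, hμ, he⟩ := msR_exists I cu1 cu2 N1 R
  exact he ▸ le_msR (h μ hμ)

lemma pmatchR_empty_iff {I : Inst N C} {cu1 cu2 : C} {S : Finset N} {μ : N → Option C} :
    PMatchR I cu1 cu2 S ∅ μ ↔ PMatch I cu1 cu2 S μ := by
  constructor
  · rintro ⟨h, -⟩; rwa [Finset.union_empty] at h
  · intro h; exact ⟨by rwa [Finset.union_empty], fun i c _ j hj => by simp at hj⟩

lemma msAvoid_eq_msR (I : Inst N C) (cu1 cu2 : C) (S : Finset N) :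
    msAvoid I cu1 cu2 S = msR I cu1 cu2 S ∅ := by
  unfold msAvoid msR
  congr 1
  ext k
  exact ⟨fun ⟨μ, h, hk⟩ => ⟨μ, pmatchR_empty_iff.2 h, hk⟩,
    fun ⟨μ, h, hk⟩ => ⟨μ, pmatchR_empty_iff.1 h, hk⟩⟩

lemma le_msAvoid {I : Inst N C} {cu1 cu2 : C} {S : Finset N} {μ : N → Option C}
    (h : PMatch I cu1 cu2 S μ) : msize μ ≤ msAvoid I cu1 cu2 S := by
  rw [msAvoid_eq_msR]; exact le_msR (pmatchR_empty_iff.2 h)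

lemma pmatch_mono {I : Inst N C} {cu1 cu2 : C} {S S' : Finset N} {μ : N → Option C}
    (hS : S' ⊆ S) (h : PMatch I cu1 cu2 S μ) : PMatch I cu1 cu2 S' μ :=
  ⟨h.1, fun i hi => h.2.1 i (hS hi), h.2.2⟩

lemma pmatchR_mono {I : Inst N C} {cu1 cu2 : C} {N1 R N1' R' : Finset N} {μ : N → Option C}
    (hN : N1' ⊆ N1) (hR : R' ⊆ R) (h : PMatchR I cu1 cu2 N1 R μ) :
    PMatchR I cu1 cu2 N1' R' μ :=
  ⟨pmatch_mono (Finset.union_subset_union hN hR) h.1,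
    fun i c hc j hj => h.2 i c hc j (hR hj)⟩

lemma msR_anti {I : Inst N C} {cu1 cu2 : C} {N1 R N1' R' : Finset N}
    (hN : N1' ⊆ N1) (hR : R' ⊆ R) :
    msR I cu1 cu2 N1 R ≤ msR I cu1 cu2 N1' R' :=
  msR_le_msR fun _ => pmatchR_mono hN hR

lemma msAvoid_anti {I : Inst N C} {cu1 cu2 : C} {S S' : Finset N} (hS : S' ⊆ S) :
    msAvoid I cu1 cu2 S ≤ msAvoid I cu1 cu2 S' := by
  rw [msAvoid_eq_msR, msAvoid_eq_msR]
  exact msR_anti hS (le_refl _)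

/-! ### Strict part facts -/

lemma strict_trans {I : Inst N C} {c : C} {x y z : Option N}
    (h1 : I.Strict c x y) (h2 : I.Strict c y z) : I.Strict c x z :=
  ⟨I.trans c x y z h1.1 h2.1, fun h => h1.2 (I.trans c y z x h2.1 h)⟩

lemma strict_irrefl {I : Inst N C} {c : C} {x : Option N} : ¬ I.Strict c x x :=
  fun h => h.2 h.1

lemma prio_rev_of_not_strict {I : Inst N C} {c : C} {x y : Option N}
    (h : ¬ I.Strict c x y) : I.prio c y x := by
  rcases I.total c x y with h1 | h1
  · by_contra h2; exact h ⟨h1, h2⟩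
  · exact h1

/-! ### PrioDecreases transfer facts -/

section Dec

variable {I I' : Inst N C} {i : N} (hdec : PrioDecreases I I' i)
include hdec

lemma dec_strict_iff {c : C} {x y : Option N} (hx : x ≠ some i) (hy : y ≠ some i) :
    I.Strict c x y ↔ I'.Strict c x y := by
  unfold Inst.Strict
  rw [hdec.2.1 c x y hx hy, hdec.2.1 c y x hy hx]

lemma dec_elig_iff {j : N} (hj : j ≠ i) (c : C) :
    I.Eligible j c ↔ I'.Eligible j c :=
  dec_strict_iff hdec (by simpa using hj) (by simp)

lemma dec_elig_of' {j : N} {c : C} (h : I'.Eligible j c) : I.Eligible j c := by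
  by_cases hj : j = i
  · subst hj
    by_contra hne
    have h2 : I.prio c none (some j) := prio_rev_of_not_strict hne
    have h3 : I'.prio c none (some j) := hdec.2.2.1 c none (by simp) h2
    exact h.2 h3
  · exact (dec_elig_iff hdec hj c).2 h

lemma dec_strict_i_of' {c : C} {y : Option N} (hy : y ≠ some i)
    (h : I'.Strict c (some i) y) : I.Strict c (some i) y := by
  by_contra hne
  have h2 : I.prio c y (some i) := prio_rev_of_not_strict hne
  exact h.2 (hdec.2.2.1 c y hy h2)

lemma dec_pmatch_of' {cu1 cu2 : C} {S : Finset N} {μ : N → Option C}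
    (h : PMatch I' cu1 cu2 S μ) : PMatch I cu1 cu2 S μ := by
  refine ⟨fun c => ?_, h.2.1, fun m c hm => ?_⟩
  · rw [show I.quota = I'.quota from hdec.1]; exact h.1 c
  · obtain ⟨h1, h2, h3⟩ := h.2.2 m c hm
    exact ⟨h1, h2, dec_elig_of' hdec h3⟩

lemma dec_pmatch_to' {cu1 cu2 : C} {S : Finset N} {μ : N → Option C}
    (hi : μ i = none) (h : PMatch I cu1 cu2 S μ) : PMatch I' cu1 cu2 S μ := by
  refine ⟨fun c => ?_, h.2.1, fun m c hm => ?_⟩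
  · rw [← show I.quota = I'.quota from hdec.1]; exact h.1 c
  · obtain ⟨h1, h2, h3⟩ := h.2.2 m c hm
    have hmi : m ≠ i := fun he => by rw [he, hi] at hm; cases hm
    exact ⟨h1, h2, (dec_elig_iff hdec hmi c).1 h3⟩

lemma dec_pmatchR_of' {cu1 cu2 : C} {N1 R : Finset N} {μ : N → Option C}
    (hiR : i ∉ R) (h : PMatchR I' cu1 cu2 N1 R μ) : PMatchR I cu1 cu2 N1 R μ := by
  refine ⟨dec_pmatch_of' hdec h.1, fun m c hm j hj hstr => ?_⟩
  have hji : j ≠ i := fun he => hiR (he ▸ hj)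
  by_cases hmi : m = i
  · subst hmi
    exact h.2 m c hm j hj (hdec.2.2.2 c (some j) (by simpa using hji) hstr)
  · exact h.2 m c hm j hj ((dec_strict_iff hdec (by simpa using hji) (by simpa using hmi)).1 hstr)

lemma dec_pmatchR_to' {cu1 cu2 : C} {N1 R : Finset N} {μ : N → Option C}
    (hi : μ i = none) (hstr : ∀ m c, μ m = some c → ¬ I.Strict c (some i) (some m))
    (h : PMatchR I cu1 cu2 N1 R μ) : PMatchR I' cu1 cu2 N1 R μ := by
  refine ⟨dec_pmatch_to' hdec hi h.1, fun m c hm j hj hs => ?_⟩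
  have hmi : m ≠ i := fun he => by rw [he, hi] at hm; cases hm
  by_cases hji : j = i
  · subst hji
    exact hstr m c hm (dec_strict_i_of' hdec (by simpa using hmi) hs)
  · exact h.2 m c hm j hj ((dec_strict_iff hdec (by simpa using hji) (by simpa using hmi)).2 hs)

end Dec

end Aux
/-! ### Fold lemmas -/

set_option linter.unusedSectionVars false

section Fold

lemma foldl_subset (g : Finset N → N → Finset N) (hg : ∀ s a, s ⊆ g s a) :
    ∀ (l : List N) (s : Finset N), s ⊆ l.foldl g s := by
  intro l
  induction l with
  | nil => intro s; exact subset_refl s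
  | cons a t ih => intro s; exact (hg s a).trans (ih (g s a))

lemma foldr_subset (f : N → Finset N → Finset N) (hf : ∀ a r, r ⊆ f a r) :
    ∀ (l : List N) (r : Finset N), r ⊆ l.foldr f r := by
  intro l
  induction l with
  | nil => intro r; exact subset_refl r
  | cons a t ih => intro r; exact (ih r).trans (hf a (t.foldr f r))

lemma foldl_mem (g : Finset N → N → Finset N) (hg : ∀ s a, g s a ⊆ insert a s) :
    ∀ (l : List N) (s : Finset N) (x : N), x ∈ l.foldl g s → x ∈ s ∨ x ∈ l := by
  intro l
  induction l with
  | nil => intro s x hx; exact Or.inl hx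
  | cons a t ih =>
    intro s x hx
    rcases ih (g s a) x hx with h | h
    · rcases Finset.mem_insert.1 (hg s a h) with h | h
      · exact Or.inr (by simp [h])
      · exact Or.inl h
    · exact Or.inr (List.mem_cons_of_mem a h)

lemma foldr_mem (f : N → Finset N → Finset N) (hf : ∀ a r, f a r ⊆ insert a r) :
    ∀ (l : List N) (r : Finset N) (x : N), x ∈ l.foldr f r → x ∈ r ∨ x ∈ l := by
  intro l
  induction l with
  | nil => intro r x hx; exact Or.inl hx
  | cons a t ih =>
    intro r x hx
    rcases Finset.mem_insert.1 (hf a (t.foldr f r) hx) with h | h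
    · exact Or.inr (by simp [h])
    · rcases ih r x h with h' | h'
      · exact Or.inl h'
      · exact Or.inr (List.mem_cons_of_mem a h')

lemma foldr_inv (f : N → Finset N → Finset N) (P : Finset N → Prop)
    (hstep : ∀ a r, P r → P (f a r)) :
    ∀ (l : List N) (r : Finset N), P r → P (l.foldr f r) := by
  intro l
  induction l with
  | nil => intro r h; exact h
  | cons a t ih => intro r h; exact hstep a (t.foldr f r) (ih r h)

lemma foldl_inv (g : Finset N → N → Finset N) (P : Finset N → Prop)
    (hstep : ∀ s a, P s → P (g s a)) :
    ∀ (l : List N) (s : Finset N), P s → P (l.foldl g s) := by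
  intro l
  induction l with
  | nil => intro s h; exact h
  | cons a t ih => intro s h; exact ih (g s a) (hstep s a h)

end Fold

/-! ### Step functions of the SRR rule -/

section Steps

noncomputable def n1Step (I : Inst N C) (cu1 cu2 : C) : Finset N → N → Finset N :=
  fun N1 i =>
    if N1.card < I.quota cu1 ∧
        msAvoid I cu1 cu2 (insert i N1) = msAvoid I cu1 cu2 (∅ : Finset N) then
      insert i N1
    else N1

lemma srrN1_eq_foldl (I : Inst N C) (cu1 cu2 : C) (order : List N) :
    srrN1 I cu1 cu2 order = order.foldl (n1Step I cu1 cu2) ∅ := rfl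

lemma n1Step_subset (I : Inst N C) (cu1 cu2 : C) (s : Finset N) (a : N) :
    s ⊆ n1Step I cu1 cu2 s a := by
  unfold n1Step; split_ifs
  · exact Finset.subset_insert a s
  · exact subset_refl s

lemma n1Step_subset' (I : Inst N C) (cu1 cu2 : C) (s : Finset N) (a : N) :
    n1Step I cu1 cu2 s a ⊆ insert a s := by
  unfold n1Step; split_ifs
  · exact subset_refl _
  · exact Finset.subset_insert a s

lemma srrN1_msAvoid (I : Inst N C) (cu1 cu2 : C) (order : List N) :
    msAvoid I cu1 cu2 (srrN1 I cu1 cu2 order) = msAvoid I cu1 cu2 (∅ : Finset N) := by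
  rw [srrN1_eq_foldl]
  refine foldl_inv (n1Step I cu1 cu2)
    (fun s => msAvoid I cu1 cu2 s = msAvoid I cu1 cu2 (∅ : Finset N)) ?_ order ∅ rfl
  intro s a hs
  unfold n1Step; split_ifs with h
  · exact h.2
  · exact hs

noncomputable def rejStep (I : Inst N C) (cu1 cu2 : C) (N1 : Finset N) :
    N → Finset N → Finset N :=
  fun i R =>
    if msR I cu1 cu2 N1 (insert i R) = msR I cu1 cu2 N1 (∅ : Finset N) then insert i R
    else R

lemma srrRej_eq_foldr (I : Inst N C) (cu1 cu2 : C) (order : List N) (N1 : Finset N) :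
    srrRej I cu1 cu2 order N1 =
      (order.filter fun i => decide (i ∉ N1)).foldr (rejStep I cu1 cu2 N1) ∅ := rfl

lemma rejStep_subset (I : Inst N C) (cu1 cu2 : C) (N1 : Finset N) (a : N) (r : Finset N) :
    r ⊆ rejStep I cu1 cu2 N1 a r := by
  unfold rejStep; split_ifs
  · exact Finset.subset_insert a r
  · exact subset_refl r

lemma rejStep_subset' (I : Inst N C) (cu1 cu2 : C) (N1 : Finset N) (a : N) (r : Finset N) :
    rejStep I cu1 cu2 N1 a r ⊆ insert a r := by
  unfold rejStep; split_ifs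
  · exact subset_refl _
  · exact Finset.subset_insert a r

/-- The invariant: the maximum matching size never drops along the rejection process. -/
lemma foldr_rej_inv (I : Inst N C) (cu1 cu2 : C) (N1 : Finset N) (l : List N) :
    msR I cu1 cu2 N1 (l.foldr (rejStep I cu1 cu2 N1) ∅) = msR I cu1 cu2 N1 (∅ : Finset N) := by
  refine foldr_inv (rejStep I cu1 cu2 N1)
    (fun r => msR I cu1 cu2 N1 r = msR I cu1 cu2 N1 (∅ : Finset N)) ?_ l ∅ rfl
  intro a r hr
  unfold rejStep; split_ifs with h
  · exact h
  · exact hr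

/-- Rejecting any non-rejected processed agent on top of the final rejected set would
strictly decrease the maximum matching size. -/
lemma foldr_rej_lt (I : Inst N C) (cu1 cu2 : C) (N1 : Finset N) :
    ∀ (l : List N) (r : Finset N) (k : N), k ∈ l →
      k ∉ l.foldr (rejStep I cu1 cu2 N1) r →
      msR I cu1 cu2 N1 (insert k (l.foldr (rejStep I cu1 cu2 N1) r)) <
        msR I cu1 cu2 N1 (∅ : Finset N) := by
  intro l
  induction l with
  | nil => intro r k hk; simp at hk
  | cons a t ih =>
    intro r k hk hknot
    set F := t.foldr (rejStep I cu1 cu2 N1) r with hF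
    have hsub : F ⊆ rejStep I cu1 cu2 N1 a F := rejStep_subset I cu1 cu2 N1 a F
    by_cases hka : k = a
    · subst hka
      have hcond : ¬ msR I cu1 cu2 N1 (insert k F) = msR I cu1 cu2 N1 (∅ : Finset N) := by
        intro h
        apply hknot
        show k ∈ rejStep I cu1 cu2 N1 k F
        unfold rejStep; rw [if_pos h]; exact Finset.mem_insert_self k F
      have heq : rejStep I cu1 cu2 N1 k F = F := by
        unfold rejStep; rw [if_neg hcond]
      rw [List.foldr_cons, heq]
      exact lt_of_le_of_ne (msR_anti (subset_refl N1) (Finset.empty_subset _)) hcond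
    · have hkt : k ∈ t := by rcases List.mem_cons.1 hk with h | h; exact absurd h hka; exact h
      have hknotF : k ∉ F := fun h => hknot (hsub h)
      have := ih r k hkt hknotF
      calc msR I cu1 cu2 N1 (insert k (rejStep I cu1 cu2 N1 a F))
          ≤ msR I cu1 cu2 N1 (insert k F) :=
            msR_anti (subset_refl N1) (Finset.insert_subset_insert k hsub)
        _ < _ := this

end Steps
/-! ### Rank, potential, and the key maximality lemma -/

section Rank

noncomputable def rankv (J : Inst N C) (c : C) (x : N) : ℕ :=
  (Finset.univ.filter fun y : Option N => J.Strict c y (some x)).card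

noncomputable def potv (J : Inst N C) (μ : N → Option C) : ℕ :=
  ∑ x : N, (μ x).elim 0 (fun c => rankv J c x)

lemma rankv_lt {J : Inst N C} {c : C} {k m : N} (h : J.Strict c (some k) (some m)) :
    rankv J c k < rankv J c m := by
  apply Finset.card_lt_card
  rw [Finset.ssubset_iff_of_subset]
  · exact ⟨some k, Finset.mem_filter.2 ⟨Finset.mem_univ _, h⟩,
      fun hc => strict_irrefl (Finset.mem_filter.1 hc).2⟩
  · intro y hy
    exact Finset.mem_filter.2 ⟨Finset.mem_univ _, strict_trans (Finset.mem_filter.1 hy).2 h⟩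

lemma sum_split {k m : N} (hmk : m ≠ k) (w : N → ℕ) :
    ∑ x : N, w x = w k + (w m + ∑ x ∈ (Finset.univ.erase k).erase m, w x) := by
  rw [← Finset.add_sum_erase _ w (Finset.mem_univ k)]
  congr 1
  rw [← Finset.add_sum_erase _ w (Finset.mem_erase.2 ⟨hmk, Finset.mem_univ m⟩)]

lemma swap_all {J : Inst N C} {c1 c2 : C} {N1 R : Finset N} {μ : N → Option C}
    (hμ : PMatchR J c1 c2 N1 R μ) {k m : N} {c : C} (hk1 : k ∉ N1) (hk2 : k ∉ R)
    (hkn : μ k = none) (hm : μ m = some c) (hkm : J.Strict c (some k) (some m)) :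
    PMatchR J c1 c2 N1 R (fun x => if x = k then some c else if x = m then none else μ x) ∧
    msize (fun x => if x = k then some c else if x = m then none else μ x) = msize μ ∧
    potv J (fun x => if x = k then some c else if x = m then none else μ x) < potv J μ := by
  set μ' : N → Option C := fun x => if x = k then some c else if x = m then none else μ x
    with hμ'def
  have hmk : m ≠ k := fun h => by rw [h, hkn] at hm; cases hm
  have hμ'k : μ' k = some c := by rw [hμ'def]; simp
  have hμ'm : μ' m = none := by rw [hμ'def]; simp [hmk]
  have hμ'x : ∀ x, x ≠ k → x ≠ m → μ' x = μ x := by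
    intro x h1 h2; rw [hμ'def]; simp [h1, h2]
  have hmNR : m ∉ N1 ∪ R := fun h => by rw [hμ.1.2.1 m h] at hm; cases hm
  have hrest' : ∀ (w : N → Option C → ℕ),
      ∑ x ∈ (Finset.univ.erase k).erase m, w x (μ' x) =
        ∑ x ∈ (Finset.univ.erase k).erase m, w x (μ x) := by
    intro w
    refine Finset.sum_congr rfl fun x hx => ?_
    have h1 := Finset.mem_erase.1 hx
    rw [hμ'x x (Finset.mem_erase.1 h1.2).1 h1.1]
  have hmgood := hμ.1.2.2 m c hm
  refine ⟨⟨⟨?_, ?_, ?_⟩, ?_⟩, ?_, ?_⟩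
  · -- IsMatching
    intro c'
    have : (Finset.univ.filter fun x => μ' x = some c').card =
        (Finset.univ.filter fun x => μ x = some c').card := by
      rw [Finset.card_filter, Finset.card_filter, sum_split hmk, sum_split hmk,
        hμ'k, hμ'm, hkn, hm]
      rw [hrest' (fun x o => if o = some c' then 1 else 0)]
      ring
    rw [this]; exact hμ.1.1 c'
  · -- unmatched on N1 ∪ R
    intro x hx
    have hxk : x ≠ k := fun h => by
      subst h; rcases Finset.mem_union.1 hx with h | h; exact hk1 h; exact hk2 h
    have hxm : x ≠ m := fun h => hmNR (h ▸ hx)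
    rw [hμ'x x hxk hxm]; exact hμ.1.2.1 x hx
  · -- compliance
    intro x c' hx
    by_cases hxk : x = k
    · subst hxk
      rw [hμ'k] at hx
      injection hx with hcc
      subst hcc
      exact ⟨hmgood.1, hmgood.2.1, strict_trans hkm hmgood.2.2⟩
    · by_cases hxm : x = m
      · subst hxm; rw [hμ'm] at hx; cases hx
      · rw [hμ'x x hxk hxm] at hx; exact hμ.1.2.2 x c' hx
  · -- reduced-graph edge condition
    intro x c' hx j hj
    by_cases hxk : x = k
    · subst hxk
      rw [hμ'k] at hx
      injection hx with hcc
      subst hcc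
      intro hs
      exact hμ.2 m c hm j hj (strict_trans hs hkm)
    · by_cases hxm : x = m
      · subst hxm; rw [hμ'm] at hx; cases hx
      · rw [hμ'x x hxk hxm] at hx; exact hμ.2 x c' hx j hj
  · -- msize
    unfold msize
    rw [Finset.card_filter, Finset.card_filter, sum_split hmk, sum_split hmk,
      hμ'k, hμ'm, hkn, hm]
    rw [hrest' (fun x o => if o ≠ none then 1 else 0)]
    ring
  · -- potential decreases
    unfold potv
    rw [sum_split hmk, sum_split hmk, hμ'k, hμ'm, hkn, hm]
    rw [hrest' (fun x o => o.elim 0 (fun c => rankv J c x))]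
    simp only [Option.elim_none, Option.elim_some]
    have := rankv_lt hkm
    omega

/-- Every maximum-size matching of the final reduced graph matches every non-rejected
agent. -/
lemma L1 {J : Inst N C} {c1 c2 : C} {N1 R : Finset N}
    (hlt : ∀ k, k ∉ N1 → k ∉ R → msR J c1 c2 N1 (insert k R) < msR J c1 c2 N1 R) :
    ∀ (μ : N → Option C), PMatchR J c1 c2 N1 R μ → msR J c1 c2 N1 R ≤ msize μ →
      ∀ k, k ∉ N1 → k ∉ R → μ k ≠ none := by
  suffices H : ∀ (p : ℕ) (μ : N → Option C), potv J μ ≤ p →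
      PMatchR J c1 c2 N1 R μ → msR J c1 c2 N1 R ≤ msize μ →
      ∀ k, k ∉ N1 → k ∉ R → μ k ≠ none by
    exact fun μ h1 h2 => H (potv J μ) μ le_rfl h1 h2
  intro p
  induction p using Nat.strong_induction_on with
  | _ p IH =>
    intro μ hp hμ hsz k hk1 hk2 hkn
    have hnot : ¬ PMatchR J c1 c2 N1 (insert k R) μ := by
      intro h
      have h1 := le_msR h
      have h2 := hlt k hk1 hk2
      omega
    have hex : ∃ m c, μ m = some c ∧ J.Strict c (some k) (some m) := by
      by_contra hc
      push_neg at hc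
      apply hnot
      refine ⟨⟨hμ.1.1, ?_, hμ.1.2.2⟩, fun m c hm j hj => ?_⟩
      · intro x hx
        rcases Finset.mem_union.1 hx with hx | hx
        · exact hμ.1.2.1 x (Finset.mem_union_left _ hx)
        · rcases Finset.mem_insert.1 hx with rfl | hx
          · exact hkn
          · exact hμ.1.2.1 x (Finset.mem_union_right _ hx)
      · rcases Finset.mem_insert.1 hj with rfl | hj
        · exact hc m c hm
        · exact hμ.2 m c hm j hj
    obtain ⟨m, c, hm, hkm⟩ := hex
    have hmk : m ≠ k := fun h => by rw [h, hkn] at hm; cases hm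
    have hmNR : m ∉ N1 ∪ R := fun h => by rw [hμ.1.2.1 m h] at hm; cases hm
    obtain ⟨hμ'P, hsz', hpot'⟩ := swap_all hμ hk1 hk2 hkn hm hkm
    have hm' : (fun x => if x = k then some c else if x = m then none else μ x) m ≠ none :=
      IH (potv J (fun x => if x = k then some c else if x = m then none else μ x))
        (lt_of_lt_of_le hpot' hp) _ le_rfl hμ'P (by rw [hsz']; exact hsz) m
        (fun h => hmNR (Finset.mem_union_left _ h))
        (fun h => hmNR (Finset.mem_union_right _ h))
    apply hm'
    simp [hmk]

end Rank
/-! ### Baseline order and counting helpers -/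

section Final

lemma baseline_pairwise {order : List N} (hnd : order.Nodup) :
    order.Pairwise (fun a b => order.idxOf a < order.idxOf b) := by
  rw [List.pairwise_iff_getElem]
  intro a b ha hb' hab
  rw [hnd.idxOf_getElem a ha, hnd.idxOf_getElem b hb']
  exact hab

lemma msize_eq_card {J : Inst N C} {c1 c2 : C} {N1 R : Finset N} {μ : N → Option C}
    (hμ : PMatchR J c1 c2 N1 R μ) (hL : ∀ k, k ∉ N1 → k ∉ R → μ k ≠ none) :
    msize μ = Fintype.card N - (N1 ∪ R).card := by
  unfold msize
  have h : Finset.univ.filter (fun x => μ x ≠ none) = Finset.univ \ (N1 ∪ R) := by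
    ext x
    simp only [Finset.mem_filter, Finset.mem_univ, true_and, Finset.mem_sdiff]
    constructor
    · intro h hx
      exact h (hμ.1.2.1 x hx)
    · intro hx
      exact hL x (fun h => hx (Finset.mem_union_left _ h))
        (fun h => hx (Finset.mem_union_right _ h))
  rw [h, Finset.card_sdiff_of_subset (Finset.subset_univ _), Finset.card_univ]

end Final

section SrrFinalVals

variable {J : Inst N C} {c1 c2 : C} {order : List N} {N1 : Finset N}
  {μP : N → Option C} {x : N}

lemma srrFinal_val_mem (h1 : x ∈ N1) : srrFinal J c1 c2 order N1 μP x = some c1 := by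
  simp only [srrFinal]
  rw [if_pos h1]

lemma srrFinal_val_some (h1 : x ∉ N1) {c : C} (h2 : μP x = some c) :
    srrFinal J c1 c2 order N1 μP x = some c := by
  simp only [srrFinal]
  rw [if_neg h1, h2]

lemma srrFinal_val_none (h1 : x ∉ N1) (h2 : μP x = none) :
    srrFinal J c1 c2 order N1 μP x =
      (if (Finset.univ.filter fun m => m ∉ N1 ∧ μP m = none ∧
          order.idxOf m < order.idxOf x).card < J.quota c2 then some c2 else none) := by
  simp only [srrFinal]
  rw [if_neg h1, h2]

end SrrFinalVals
/-- The SRR rule is weakly non-bossy: if agent `i`'s priority (for the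
preferential categories) decreases from `I` to `I'`, where in both instances the priorities
of `c_u^1` and `c_u^2` equal the same baseline ordering and all agents are eligible for
them, and `i` is unmatched under the SRR rule at `I`, then every agent `j` with `i ≻_π j`
is matched under the SRR rule at `I` iff she is matched under the SRR rule at `I'`. -/
theorem srr_weakly_non_bossy (I I' : Inst N C) (cu1 cu2 : C) (order : List N) (i : N)
    (μ μ' : N → Option C) (hne : cu1 ≠ cu2) (hb : IsBaseline order)
    (h1E : ∀ j : N, I.Eligible j cu1) (h2E : ∀ j : N, I.Eligible j cu2)
    (h1E' : ∀ j : N, I'.Eligible j cu1) (h2E' : ∀ j : N, I'.Eligible j cu2)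
    (h1P : ∀ j k : N, I.Strict cu1 (some j) (some k) ↔ order.idxOf j < order.idxOf k)
    (h2P : ∀ j k : N, I.Strict cu2 (some j) (some k) ↔ order.idxOf j < order.idxOf k)
    (h1P' : ∀ j k : N, I'.Strict cu1 (some j) (some k) ↔ order.idxOf j < order.idxOf k)
    (h2P' : ∀ j k : N, I'.Strict cu2 (some j) (some k) ↔ order.idxOf j < order.idxOf k)
    (hdec : PrioDecreases I I' i)
    (hout : IsSRROutcome I cu1 cu2 order μ) (hout' : IsSRROutcome I' cu1 cu2 order μ')
    (hunmatched : μ i = none) :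
    ∀ j : N, order.idxOf i < order.idxOf j → (μ j ≠ none ↔ μ' j ≠ none) := by
  classical
  obtain ⟨hnd, hmem⟩ := hb
  obtain ⟨μP, hμP, hszP, hμdef⟩ := hout
  subst hμdef
  set N1 := srrN1 I cu1 cu2 order with hN1def
  set Rf := srrRej I cu1 cu2 order N1 with hRfdef
  -- unpack unmatchedness of i
  have hiN1 : i ∉ N1 := by
    intro h
    rw [srrFinal_val_mem h] at hunmatched
    cases hunmatched
  have hμPi : μP i = none := by
    cases hPi : μP i with
    | none => rfl
    | some c =>
      rw [srrFinal_val_some hiN1 hPi] at hunmatched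
      cases hunmatched
  have hcnt : I.quota cu2 ≤ (Finset.univ.filter fun m =>
      m ∉ N1 ∧ μP m = none ∧ order.idxOf m < order.idxOf i).card := by
    rw [srrFinal_val_none hiN1 hμPi] at hunmatched
    by_contra h
    push_neg at h
    rw [if_pos h] at hunmatched
    cases hunmatched
  -- the processed list
  set l := order.filter (fun x => decide (x ∉ N1)) with hldef
  have hmeml : ∀ x, x ∉ N1 → x ∈ l := fun x hx =>
    List.mem_filter.2 ⟨hmem x, by simpa using hx⟩
  have hlsub : ∀ x ∈ l, x ∉ N1 := fun x hx => by
    simpa using (List.mem_filter.1 hx).2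
  have hRf_foldr : Rf = l.foldr (rejStep I cu1 cu2 N1) ∅ := by
    rw [hRfdef, srrRej_eq_foldr, ← hldef]
  have hRfmem : ∀ x ∈ Rf, x ∈ l := by
    intro x hx
    rcases foldr_mem _ (rejStep_subset' I cu1 cu2 N1) l ∅ x (by rwa [← hRf_foldr]) with h | h
    · simp at h
    · exact h
  have hRfN1 : ∀ x ∈ Rf, x ∉ N1 := fun x hx => hlsub x (hRfmem x hx)
  have hRfinv : msR I cu1 cu2 N1 Rf = msR I cu1 cu2 N1 ∅ := by
    rw [hRf_foldr]; exact foldr_rej_inv I cu1 cu2 N1 l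
  have hltI : ∀ k, k ∉ N1 → k ∉ Rf →
      msR I cu1 cu2 N1 (insert k Rf) < msR I cu1 cu2 N1 Rf := by
    intro k h1 h2
    rw [hRfinv, hRf_foldr]
    exact foldr_rej_lt I cu1 cu2 N1 l ∅ k (hmeml k h1) (by rwa [← hRf_foldr])
  have hLI : ∀ k, k ∉ N1 → k ∉ Rf → μP k ≠ none :=
    L1 hltI μP hμP (le_of_eq hszP.symm)
  have hiRf : i ∈ Rf := by
    by_contra h
    exact hLI i hiN1 h hμPi
  -- size bookkeeping at I
  have hmain : msR I cu1 cu2 N1 ∅ = msize μP := by rw [← hRfinv, ← hszP]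
  have hA1 : msAvoid I cu1 cu2 N1 = msize μP := by rw [msAvoid_eq_msR]; exact hmain
  have hA0 : msAvoid I cu1 cu2 (∅ : Finset N) = msize μP := by
    rw [← srrN1_msAvoid I cu1 cu2 order, ← hN1def, hA1]
  -- witness transfer
  have hμPns : ∀ m c, μP m = some c → ¬ I.Strict c (some i) (some m) :=
    fun m c h => hμP.2 m c h i hiRf
  have hwitI : ∀ (A B : Finset N), A ⊆ N1 → B ⊆ Rf → PMatchR I cu1 cu2 A B μP :=
    fun A B h1 h2 => pmatchR_mono h1 h2 hμP
  have hwit : ∀ (A B : Finset N), A ⊆ N1 → B ⊆ Rf → PMatchR I' cu1 cu2 A B μP :=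
    fun A B h1 h2 => dec_pmatchR_to' hdec hμPi hμPns (hwitI A B h1 h2)
  have hq : I.quota = I'.quota := hdec.1
  -- msAvoid at I'
  have hmsA'le : ∀ (S : Finset N), msAvoid I' cu1 cu2 S ≤ msAvoid I cu1 cu2 S := by
    intro S
    rw [msAvoid_eq_msR, msAvoid_eq_msR]
    exact msR_le_msR (fun ν h => dec_pmatchR_of' hdec (by simp) h)
  have hA0' : msAvoid I' cu1 cu2 (∅ : Finset N) = msize μP := by
    apply le_antisymm (le_trans (hmsA'le ∅) hA0.le)
    exact le_msAvoid (pmatchR_empty_iff.1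
      (hwit ∅ ∅ (Finset.empty_subset _) (Finset.empty_subset _)))
  -- srrN1 at I' equals N1
  have hB : srrN1 I' cu1 cu2 order = N1 := by
    rw [srrN1_eq_foldl]
    suffices H : ∀ (lst : List N) (s : Finset N),
        lst.foldl (n1Step I cu1 cu2) s = N1 → s ⊆ N1 →
        lst.foldl (n1Step I' cu1 cu2) s = N1 by
      refine H order ∅ ?_ (Finset.empty_subset _)
      rw [← srrN1_eq_foldl, ← hN1def]
    intro lst
    induction lst with
    | nil => intro s h _; simpa using h
    | cons a t ih =>
      intro s h hs
      rw [List.foldl_cons] at h ⊢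
      have hsub1 : n1Step I cu1 cu2 s a ⊆ N1 := by
        rw [← h]
        exact foldl_subset _ (n1Step_subset I cu1 cu2) t _
      have hstep : n1Step I' cu1 cu2 s a = n1Step I cu1 cu2 s a := by
        by_cases hcard : s.card < I.quota cu1
        · by_cases hms : msAvoid I cu1 cu2 (insert a s) = msAvoid I cu1 cu2 (∅ : Finset N)
          · have hIa : n1Step I cu1 cu2 s a = insert a s := by
              unfold n1Step; rw [if_pos ⟨hcard, hms⟩]
            have hins : insert a s ⊆ N1 := hIa ▸ hsub1
            have hms' : msAvoid I' cu1 cu2 (insert a s) =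
                msAvoid I' cu1 cu2 (∅ : Finset N) := by
              rw [hA0']
              apply le_antisymm (le_trans (msAvoid_anti (Finset.empty_subset _)) hA0'.le)
              exact le_msAvoid (pmatchR_empty_iff.1
                (hwit (insert a s) ∅ hins (Finset.empty_subset _)))
            rw [hIa]
            unfold n1Step
            rw [if_pos ⟨by rw [← hq]; exact hcard, hms'⟩]
          · have hIa : n1Step I cu1 cu2 s a = s := by
              unfold n1Step; rw [if_neg (fun hc => hms hc.2)]
            have hlt1 : msAvoid I cu1 cu2 (insert a s) <
                msAvoid I cu1 cu2 (∅ : Finset N) :=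
              lt_of_le_of_ne (msAvoid_anti (Finset.empty_subset _)) hms
            have hms' : ¬ (msAvoid I' cu1 cu2 (insert a s) =
                msAvoid I' cu1 cu2 (∅ : Finset N)) := by
              have h2 := hmsA'le (insert a s)
              rw [hA0', ← hA0]
              omega
            rw [hIa]
            unfold n1Step
            rw [if_neg (fun hc => hms' hc.2)]
        · have hcard' : ¬ (s.card < I'.quota cu1) := by rw [← hq]; exact hcard
          unfold n1Step
          rw [if_neg (fun hc => hcard' hc.1), if_neg (fun hc => hcard hc.1)]
      rw [hstep]
      exact ih (n1Step I cu1 cu2 s a) h hsub1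
  -- decompose the processed list around i
  have hil : i ∈ l := hmeml i hiN1
  obtain ⟨l₁, l₂, hldecomp⟩ := List.append_of_mem hil
  have hpwl : l.Pairwise (fun a b => order.idxOf a < order.idxOf b) :=
    List.Pairwise.sublist (by rw [hldef]; exact List.filter_sublist (l := order))
      (baseline_pairwise hnd)
  rw [hldecomp, List.pairwise_append] at hpwl
  obtain ⟨-, hp2, hcross⟩ := hpwl
  rw [List.pairwise_cons] at hp2
  obtain ⟨hl₂gt, -⟩ := hp2
  have hl₁lt : ∀ x ∈ l₁, order.idxOf x < order.idxOf i :=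
    fun x hx => hcross x hx i (List.mem_cons_self (a := i) (l := l₂))
  have hil₂ : i ∉ l₂ := fun h => lt_irrefl _ (hl₂gt i h)
  have hil₁ : i ∉ l₁ := fun h => lt_irrefl _ (hl₁lt i h)
  have hsufl2 : (i :: l₂) <:+ l := ⟨l₁, hldecomp.symm⟩
  -- msR comparisons between I and I'
  have hmsR'0 : msR I' cu1 cu2 N1 ∅ = msize μP := by
    rw [← msAvoid_eq_msR]
    apply le_antisymm (le_trans (hmsA'le N1) hA1.le)
    exact le_msAvoid (pmatchR_empty_iff.1 (hwit N1 ∅ subset_rfl (Finset.empty_subset _)))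
  have hmsR'le : ∀ (R : Finset N), i ∉ R → msR I' cu1 cu2 N1 R ≤ msR I cu1 cu2 N1 R :=
    fun R hiR => msR_le_msR (fun ν h => dec_pmatchR_of' hdec hiR h)
  have hwitR : ∀ (R : Finset N), R ⊆ Rf → msize μP ≤ msR I' cu1 cu2 N1 R :=
    fun R hR => le_msR (hwit N1 R subset_rfl hR)
  have hacc : ∀ t, t <:+ l → t.foldr (rejStep I cu1 cu2 N1) ∅ ⊆ Rf := by
    rintro t ⟨pre, hpre⟩
    rw [hRf_foldr, ← hpre, List.foldr_append]
    exact foldr_subset _ (rejStep_subset I cu1 cu2 N1) pre _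
  -- the rejection runs agree on the suffix after i
  have hA : ∀ t, t <:+ l₂ →
      t.foldr (rejStep I' cu1 cu2 N1) ∅ = t.foldr (rejStep I cu1 cu2 N1) ∅ := by
    intro t
    induction t with
    | nil => intro _; rfl
    | cons a t' ihA =>
      intro hsuf
      have ht' : t' <:+ l₂ := (List.suffix_cons a t').trans hsuf
      have hal₂ : a ∈ l₂ := hsuf.subset (List.mem_cons_self (a := a) (l := t'))
      have hane : a ≠ i := fun h => hil₂ (h ▸ hal₂)
      have hsufl : (a :: t') <:+ l := hsuf.trans ((List.suffix_cons i l₂).trans hsufl2)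
      have hir : i ∉ t'.foldr (rejStep I cu1 cu2 N1) ∅ := by
        intro h
        rcases foldr_mem _ (rejStep_subset' I cu1 cu2 N1) t' ∅ i h with h' | h'
        · simp at h'
        · exact hil₂ (ht'.subset h')
      rw [List.foldr_cons, List.foldr_cons, ihA ht']
      set r := t'.foldr (rejStep I cu1 cu2 N1) ∅ with hrdef
      have hfar : rejStep I cu1 cu2 N1 a r ⊆ Rf := by
        have h0 := hacc (a :: t') hsufl
        rwa [List.foldr_cons] at h0
      have hiins : i ∉ insert a r := by
        simp only [Finset.mem_insert]
        rintro (h | h)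
        · exact hane h.symm
        · exact hir h
      by_cases hms : msR I cu1 cu2 N1 (insert a r) = msR I cu1 cu2 N1 (∅ : Finset N)
      · have hIa : rejStep I cu1 cu2 N1 a r = insert a r := by
          unfold rejStep; rw [if_pos hms]
        have hins : insert a r ⊆ Rf := hIa ▸ hfar
        have hms' : msR I' cu1 cu2 N1 (insert a r) = msR I' cu1 cu2 N1 (∅ : Finset N) := by
          apply le_antisymm (msR_anti subset_rfl (Finset.empty_subset _))
          rw [hmsR'0]
          exact hwitR (insert a r) hins
        rw [hIa]
        unfold rejStep
        rw [if_pos hms']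
      · have hIa : rejStep I cu1 cu2 N1 a r = r := by
          unfold rejStep; rw [if_neg hms]
        have hlt2 : msR I cu1 cu2 N1 (insert a r) < msR I cu1 cu2 N1 (∅ : Finset N) :=
          lt_of_le_of_ne (msR_anti subset_rfl (Finset.empty_subset _)) hms
        have hms' : ¬ (msR I' cu1 cu2 N1 (insert a r) =
            msR I' cu1 cu2 N1 (∅ : Finset N)) := by
          have h1 := hmsR'le (insert a r) hiins
          rw [hmsR'0, ← hmain]
          omega
        rw [hIa]
        unfold rejStep
        rw [if_neg hms']
  -- the step at i
  set rI := l₂.foldr (rejStep I cu1 cu2 N1) ∅ with hrI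
  have hA2 : l₂.foldr (rejStep I' cu1 cu2 N1) ∅ = rI := hA l₂ List.suffix_rfl
  have hirI : i ∉ rI := by
    rw [hrI]
    intro h
    rcases foldr_mem _ (rejStep_subset' I cu1 cu2 N1) l₂ ∅ i h with h' | h'
    · simp at h'
    · exact hil₂ h'
  have hcondI : msR I cu1 cu2 N1 (insert i rI) = msR I cu1 cu2 N1 (∅ : Finset N) := by
    by_contra hc
    have hIa : rejStep I cu1 cu2 N1 i rI = rI := by
      unfold rejStep; rw [if_neg hc]
    have hRfeq : Rf = l₁.foldr (rejStep I cu1 cu2 N1) rI := by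
      rw [hRf_foldr, hldecomp, List.foldr_append, List.foldr_cons, ← hrI, hIa]
    rcases foldr_mem _ (rejStep_subset' I cu1 cu2 N1) l₁ rI i (by rwa [← hRfeq]) with h' | h'
    · exact hirI h'
    · exact hil₁ h'
  have hfoldi : (i :: l₂).foldr (rejStep I cu1 cu2 N1) ∅ = insert i rI := by
    rw [List.foldr_cons, ← hrI]
    unfold rejStep; rw [if_pos hcondI]
  have hR₂Rf : insert i rI ⊆ Rf := by
    have h0 := hacc (i :: l₂) hsufl2
    rwa [hfoldi] at h0
  have hcondI' : msR I' cu1 cu2 N1 (insert i rI) = msR I' cu1 cu2 N1 (∅ : Finset N) := by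
    apply le_antisymm (msR_anti subset_rfl (Finset.empty_subset _))
    rw [hmsR'0]
    exact hwitR _ hR₂Rf
  have hfoldi' : (i :: l₂).foldr (rejStep I' cu1 cu2 N1) ∅ = insert i rI := by
    rw [List.foldr_cons, hA2]
    unfold rejStep; rw [if_pos hcondI']
  -- the rejected set at I'
  obtain ⟨μ'P, hμ'P, hsz'P, hμ'def⟩ := hout'
  rw [hB] at hμ'P hsz'P hμ'def
  subst hμ'def
  set Rf' := srrRej I' cu1 cu2 order N1 with hRf'def
  have hRf'_foldr : Rf' = l.foldr (rejStep I' cu1 cu2 N1) ∅ := by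
    rw [hRf'def, srrRej_eq_foldr, ← hldef]
  have hRf'mem : ∀ x ∈ Rf', x ∈ l := by
    intro x hx
    rcases foldr_mem _ (rejStep_subset' I' cu1 cu2 N1) l ∅ x (by rwa [← hRf'_foldr]) with h | h
    · simp at h
    · exact h
  have hRf'N1 : ∀ x ∈ Rf', x ∉ N1 := fun x hx => hlsub x (hRf'mem x hx)
  have hRf'inv : msR I' cu1 cu2 N1 Rf' = msR I' cu1 cu2 N1 ∅ := by
    rw [hRf'_foldr]; exact foldr_rej_inv I' cu1 cu2 N1 l
  have hltI' : ∀ k, k ∉ N1 → k ∉ Rf' →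
      msR I' cu1 cu2 N1 (insert k Rf') < msR I' cu1 cu2 N1 Rf' := by
    intro k h1 h2
    rw [hRf'inv, hRf'_foldr]
    exact foldr_rej_lt I' cu1 cu2 N1 l ∅ k (hmeml k h1) (by rwa [← hRf'_foldr])
  have hLI' : ∀ k, k ∉ N1 → k ∉ Rf' → μ'P k ≠ none :=
    L1 hltI' μ'P hμ'P (le_of_eq hsz'P.symm)
  -- the two rejected sets agree above i
  have hRfdec : Rf = l₁.foldr (rejStep I cu1 cu2 N1) (insert i rI) := by
    rw [hRf_foldr, hldecomp, List.foldr_append, hfoldi]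
  have hRf'dec : Rf' = l₁.foldr (rejStep I' cu1 cu2 N1) (insert i rI) := by
    rw [hRf'_foldr, hldecomp, List.foldr_append, hfoldi']
  have hhigh : ∀ x, order.idxOf i ≤ order.idxOf x → (x ∈ Rf ↔ x ∈ insert i rI) := by
    intro x hx
    constructor
    · intro hxRf
      rcases foldr_mem _ (rejStep_subset' I cu1 cu2 N1) l₁ _ x (by rwa [← hRfdec]) with h | h
      · exact h
      · exact absurd hx (not_le.2 (hl₁lt x h))
    · intro h
      rw [hRfdec]
      exact foldr_subset _ (rejStep_subset I cu1 cu2 N1) l₁ _ h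
  have hhigh' : ∀ x, order.idxOf i ≤ order.idxOf x → (x ∈ Rf' ↔ x ∈ insert i rI) := by
    intro x hx
    constructor
    · intro hxRf
      rcases foldr_mem _ (rejStep_subset' I' cu1 cu2 N1) l₁ _ x (by rwa [← hRf'dec]) with h | h
      · exact h
      · exact absurd hx (not_le.2 (hl₁lt x h))
    · intro h
      rw [hRf'dec]
      exact foldr_subset _ (rejStep_subset I' cu1 cu2 N1) l₁ _ h
  have hhighBoth : ∀ x, order.idxOf i ≤ order.idxOf x → (x ∈ Rf ↔ x ∈ Rf') :=
    fun x hx => (hhigh x hx).trans (hhigh' x hx).symm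
  -- cardinalities
  have hsz'Peq : msize μ'P = msize μP := by
    rw [hsz'P, hRf'inv, hmsR'0]
  have hcardRf : Rf.card = Rf'.card := by
    have d1 : Disjoint N1 Rf := Finset.disjoint_right.2 hRfN1
    have d2 : Disjoint N1 Rf' := Finset.disjoint_right.2 hRf'N1
    have e1 := msize_eq_card hμP hLI
    have e2 := msize_eq_card hμ'P hLI'
    have c1 : (N1 ∪ Rf).card = N1.card + Rf.card := Finset.card_union_of_disjoint d1
    have c2 : (N1 ∪ Rf').card = N1.card + Rf'.card := Finset.card_union_of_disjoint d2
    have b1 : (N1 ∪ Rf).card ≤ Fintype.card N := by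
      rw [← Finset.card_univ]; exact Finset.card_le_univ _
    have b2 : (N1 ∪ Rf').card ≤ Fintype.card N := by
      rw [← Finset.card_univ]; exact Finset.card_le_univ _
    omega
  have hhighfilter : Rf.filter (fun x => ¬ order.idxOf x < order.idxOf i) =
      Rf'.filter (fun x => ¬ order.idxOf x < order.idxOf i) := by
    ext x
    simp only [Finset.mem_filter]
    constructor
    · rintro ⟨h1, h2⟩; exact ⟨(hhighBoth x (not_lt.1 h2)).1 h1, h2⟩
    · rintro ⟨h1, h2⟩; exact ⟨(hhighBoth x (not_lt.1 h2)).2 h1, h2⟩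
  have hlowcard : (Rf.filter (fun x => order.idxOf x < order.idxOf i)).card =
      (Rf'.filter (fun x => order.idxOf x < order.idxOf i)).card := by
    have q1 := Finset.card_filter_add_card_filter_not
      (s := Rf) (p := fun x => order.idxOf x < order.idxOf i)
    have q2 := Finset.card_filter_add_card_filter_not
      (s := Rf') (p := fun x => order.idxOf x < order.idxOf i)
    rw [hhighfilter] at q1
    omega
  -- identify unmatched agents with the rejected sets
  have hfI : ∀ (y : N),
      (Finset.univ.filter fun m => m ∉ N1 ∧ μP m = none ∧
          order.idxOf m < order.idxOf y) =
        Rf.filter (fun x => order.idxOf x < order.idxOf y) := by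
    intro y
    ext x
    simp only [Finset.mem_filter, Finset.mem_univ, true_and]
    constructor
    · rintro ⟨h1, h2, h3⟩
      refine ⟨?_, h3⟩
      by_contra h4
      exact hLI x h1 h4 h2
    · rintro ⟨h1, h2⟩
      exact ⟨hRfN1 x h1, hμP.1.2.1 x (Finset.mem_union_right _ h1), h2⟩
  have hfI' : ∀ (y : N),
      (Finset.univ.filter fun m => m ∉ N1 ∧ μ'P m = none ∧
          order.idxOf m < order.idxOf y) =
        Rf'.filter (fun x => order.idxOf x < order.idxOf y) := by
    intro y
    ext x
    simp only [Finset.mem_filter, Finset.mem_univ, true_and]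
    constructor
    · rintro ⟨h1, h2, h3⟩
      refine ⟨?_, h3⟩
      by_contra h4
      exact hLI' x h1 h4 h2
    · rintro ⟨h1, h2⟩
      exact ⟨hRf'N1 x h1, hμ'P.1.2.1 x (Finset.mem_union_right _ h1), h2⟩
  have hcnt2 : I.quota cu2 ≤
      (Rf.filter (fun x => order.idxOf x < order.idxOf i)).card := by
    have h0 := hcnt
    rw [hfI i] at h0
    exact h0
  -- conclusion
  intro j hij
  by_cases hjN1 : j ∈ N1
  · rw [srrFinal_val_mem (J := I) hjN1, srrFinal_val_mem (J := I') hjN1]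
  · by_cases hjRf : j ∈ Rf
    · have hjRf' : j ∈ Rf' := (hhighBoth j hij.le).1 hjRf
      have hμPj : μP j = none := hμP.1.2.1 j (Finset.mem_union_right _ hjRf)
      have hμ'Pj : μ'P j = none := hμ'P.1.2.1 j (Finset.mem_union_right _ hjRf')
      have hcj : ¬ ((Rf.filter (fun x =>
          order.idxOf x < order.idxOf j)).card < I.quota cu2) := by
        apply not_lt.2
        calc I.quota cu2
            ≤ (Rf.filter (fun x => order.idxOf x < order.idxOf i)).card := hcnt2
          _ ≤ (Rf.filter (fun x => order.idxOf x < order.idxOf j)).card := by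
              apply Finset.card_le_card
              intro x hx
              simp only [Finset.mem_filter] at hx ⊢
              exact ⟨hx.1, hx.2.trans hij⟩
      have hcj' : ¬ ((Rf'.filter (fun x =>
          order.idxOf x < order.idxOf j)).card < I'.quota cu2) := by
        apply not_lt.2
        rw [← hq]
        calc I.quota cu2
            ≤ (Rf.filter (fun x => order.idxOf x < order.idxOf i)).card := hcnt2
          _ = (Rf'.filter (fun x => order.idxOf x < order.idxOf i)).card := hlowcard
          _ ≤ (Rf'.filter (fun x => order.idxOf x < order.idxOf j)).card := by
              apply Finset.card_le_card
              intro x hx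
              simp only [Finset.mem_filter] at hx ⊢
              exact ⟨hx.1, hx.2.trans hij⟩
      rw [srrFinal_val_none (J := I) hjN1 hμPj, srrFinal_val_none (J := I') hjN1 hμ'Pj,
        hfI j, hfI' j, if_neg hcj, if_neg hcj']
    · have hjRf' : j ∉ Rf' := fun h => hjRf ((hhighBoth j hij.le).2 h)
      obtain ⟨c, hc⟩ := Option.ne_none_iff_exists'.1 (hLI j hjN1 hjRf)
      obtain ⟨c', hc'⟩ := Option.ne_none_iff_exists'.1 (hLI' j hjN1 hjRf')
      rw [srrFinal_val_some (J := I) hjN1 hc, srrFinal_val_some (J := I') hjN1 hc']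
      simp
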